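/- arXiv:2007.03571 — 6 statements merged into one kernel-verified Lean document; each statement's English description precedes it below -/
import Mathlib

section
/- The probability generating function of the NDOPPE distribution: for |s| < 1/(1−θ), E[s^X] = (Σ_{k=0}^r a_k k!/(1−(1−θ)s)^{k+1}) / (Σ_{k=0}^r a_k k!/θ^{k+1}). -/
open Finset

/-- The polynomial part p(x) = ∑_{k=0}^r a_k · k! · C(x+k, x) of the NDOPPE pmf. -/
noncomputable def ndoppeP (a : ℕ → ℝ) (r : ℕ) (x : ℕ) : ℝ :=
  ∑ k ∈ Finset.range (r + 1), a k * (Nat.factorial k) * ((x + k).choose x)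

/-- The normalizing constant h(θ) = (∑_{k=0}^r a_k · k! / θ^{k+1})⁻¹. -/
noncomputable def ndoppeH (θ : ℝ) (a : ℕ → ℝ) (r : ℕ) : ℝ :=
  (∑ k ∈ Finset.range (r + 1), a k * (Nat.factorial k) / θ ^ (k + 1))⁻¹

/-- The NDOPPE pmf p(x;θ) = h(θ)·p(x)·(1−θ)^x. -/
noncomputable def ndoppePMF (θ : ℝ) (a : ℕ → ℝ) (r : ℕ) (x : ℕ) : ℝ :=
  ndoppeH θ a r * ndoppeP a r x * (1 - θ) ^ x

theorem ndoppe_pgf (θ : ℝ) (a : ℕ → ℝ) (r : ℕ) (s : ℝ)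
    (hθ0 : 0 < θ) (hθ1 : θ < 1) (ha : ∀ k, 0 ≤ a k)
    (hpos : ∃ k ≤ r, 0 < a k) (hs : |s| < 1 / (1 - θ)) :
    ∑' x : ℕ, s ^ x * ndoppePMF θ a r x =
      (∑ k ∈ Finset.range (r + 1),
          a k * (Nat.factorial k) / (1 - (1 - θ) * s) ^ (k + 1)) /
        (∑ k ∈ Finset.range (r + 1), a k * (Nat.factorial k) / θ ^ (k + 1)) := by
  set t : ℝ := (1 - θ) * s with ht
  have h1θ : (0:ℝ) < 1 - θ := by linarith
  have htlt : ‖t‖ < 1 := by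
    rw [Real.norm_eq_abs, ht, abs_mul, abs_of_pos h1θ]
    calc (1 - θ) * |s| < (1 - θ) * (1 / (1 - θ)) := by
          exact mul_lt_mul_of_pos_left hs h1θ
      _ = 1 := mul_one_div_cancel (ne_of_gt h1θ)
  have key : ∀ x : ℕ, s ^ x * ndoppePMF θ a r x =
      ∑ k ∈ Finset.range (r + 1),
        ndoppeH θ a r * (a k * (Nat.factorial k)) * (((x + k).choose k : ℝ) * t ^ x) := by
    intro x
    rw [ndoppePMF, ndoppeP, Finset.mul_sum, Finset.sum_mul, Finset.mul_sum]
    refine Finset.sum_congr rfl fun k _ => ?_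
    have hch : ((x + k).choose x : ℝ) = ((x + k).choose k : ℝ) := by
      norm_cast
      rw [← Nat.choose_symm (Nat.le_add_left k x)]
      congr 1
      omega
    rw [hch, ht, mul_pow]
    ring
  have hsumm : ∀ k : ℕ, Summable (fun x : ℕ =>
      ndoppeH θ a r * (a k * (Nat.factorial k)) * (((x + k).choose k : ℝ) * t ^ x)) := by
    intro k
    exact (summable_choose_mul_geometric_of_norm_lt_one k htlt).mul_left _
  calc ∑' x : ℕ, s ^ x * ndoppePMF θ a r x
      = ∑' x : ℕ, ∑ k ∈ Finset.range (r + 1),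
          ndoppeH θ a r * (a k * (Nat.factorial k)) * (((x + k).choose k : ℝ) * t ^ x) := by
        exact tsum_congr key
    _ = ∑ k ∈ Finset.range (r + 1), ∑' x : ℕ,
          ndoppeH θ a r * (a k * (Nat.factorial k)) * (((x + k).choose k : ℝ) * t ^ x) := by
        exact Summable.tsum_finsetSum fun k _ => hsumm k
    _ = ∑ k ∈ Finset.range (r + 1),
          ndoppeH θ a r * (a k * (Nat.factorial k)) * (1 / (1 - t) ^ (k + 1)) := by
        refine Finset.sum_congr rfl fun k _ => ?_
        rw [tsum_mul_left, tsum_choose_mul_geometric_of_norm_lt_one k htlt]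
    _ = ndoppeH θ a r * ∑ k ∈ Finset.range (r + 1),
          a k * (Nat.factorial k) / (1 - t) ^ (k + 1) := by
        rw [Finset.mul_sum]
        refine Finset.sum_congr rfl fun k _ => ?_
        ring
    _ = (∑ k ∈ Finset.range (r + 1),
          a k * (Nat.factorial k) / (1 - (1 - θ) * s) ^ (k + 1)) /
        (∑ k ∈ Finset.range (r + 1), a k * (Nat.factorial k) / θ ^ (k + 1)) := by
        rw [ndoppeH, ht, div_eq_inv_mul]
end

section
/- The moment generating function of the NDOPPE distribution: for t < −ln(1−θ), E[e^{tX}] = (Σ_{k=0}^r a_k k!/(1−(1−θ)e^t)^{k+1}) / (Σ_{k=0}^r a_k k!/θ^{k+1}). -/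
open Finset

theorem ndoppe_mgf (θ : ℝ) (a : ℕ → ℝ) (r : ℕ) (t : ℝ)
    (hθ0 : 0 < θ) (hθ1 : θ < 1) (ha : ∀ k, 0 ≤ a k)
    (hpos : ∃ k ≤ r, 0 < a k) (ht : t < -Real.log (1 - θ)) :
    ∑' x : ℕ, Real.exp (t * x) * ndoppePMF θ a r x =
      (∑ k ∈ Finset.range (r + 1),
          a k * (Nat.factorial k) / (1 - (1 - θ) * Real.exp t) ^ (k + 1)) /
        (∑ k ∈ Finset.range (r + 1), a k * (Nat.factorial k) / θ ^ (k + 1)) := by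
  set q : ℝ := (1 - θ) * Real.exp t with hq
  have h1θ : (0:ℝ) < 1 - θ := by linarith
  have hq0 : 0 < q := mul_pos h1θ (Real.exp_pos t)
  have hq1 : q < 1 := by
    have : Real.exp t < Real.exp (-Real.log (1 - θ)) := Real.exp_lt_exp.2 ht
    rw [Real.exp_neg, Real.exp_log h1θ] at this
    calc q < (1 - θ) * (1 - θ)⁻¹ := by
            exact mul_lt_mul_of_pos_left this h1θ
      _ = 1 := mul_inv_cancel₀ (ne_of_gt h1θ)
  have hqn : ‖q‖ < 1 := by rw [Real.norm_eq_abs, abs_of_pos hq0]; exact hq1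
  have hchoose : ∀ x k : ℕ, ((x + k).choose x : ℝ) = ((x + k).choose k : ℝ) := by
    intro x k
    have := Nat.choose_symm (Nat.le_add_right x k)
    simp only [Nat.add_sub_cancel_left] at this
    rw [← this]
  have key : ∀ x : ℕ, Real.exp (t * x) * ndoppePMF θ a r x =
      ∑ k ∈ Finset.range (r + 1),
        ndoppeH θ a r * (a k * (Nat.factorial k)) * (((x + k).choose k : ℝ) * q ^ x) := by
    intro x
    rw [ndoppePMF, ndoppeP, Finset.mul_sum, Finset.sum_mul, Finset.mul_sum]
    refine Finset.sum_congr rfl fun k _ ↦ ?_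
    rw [hchoose x k, hq, mul_pow, ← Real.exp_nat_mul, mul_comm (x:ℝ) t]
    ring
  have hsummable : ∀ k ∈ Finset.range (r + 1), Summable (fun x : ℕ ↦
      ndoppeH θ a r * (a k * (Nat.factorial k)) * (((x + k).choose k : ℝ) * q ^ x)) :=
    fun k _ ↦ (summable_choose_mul_geometric_of_norm_lt_one k hqn).mul_left _
  calc ∑' x : ℕ, Real.exp (t * x) * ndoppePMF θ a r x
      = ∑' x : ℕ, ∑ k ∈ Finset.range (r + 1),
          ndoppeH θ a r * (a k * (Nat.factorial k)) * (((x + k).choose k : ℝ) * q ^ x) :=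
        tsum_congr key
    _ = ∑ k ∈ Finset.range (r + 1), ∑' x : ℕ,
          ndoppeH θ a r * (a k * (Nat.factorial k)) * (((x + k).choose k : ℝ) * q ^ x) :=
        Summable.tsum_finsetSum hsummable
    _ = ∑ k ∈ Finset.range (r + 1),
          ndoppeH θ a r * (a k * (Nat.factorial k)) * (1 / (1 - q) ^ (k + 1)) := by
        refine Finset.sum_congr rfl fun k _ ↦ ?_
        rw [tsum_mul_left, tsum_choose_mul_geometric_of_norm_lt_one k hqn]
    _ = ndoppeH θ a r * ∑ k ∈ Finset.range (r + 1),
          a k * (Nat.factorial k) / (1 - q) ^ (k + 1) := by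
        rw [Finset.mul_sum]; refine Finset.sum_congr rfl fun k _ ↦ ?_; ring
    _ = (∑ k ∈ Finset.range (r + 1),
          a k * (Nat.factorial k) / (1 - q) ^ (k + 1)) /
        (∑ k ∈ Finset.range (r + 1), a k * (Nat.factorial k) / θ ^ (k + 1)) := by
        rw [ndoppeH, div_eq_inv_mul]
end

section
/- The m-th factorial moment of the NDOPPE distribution is E[X(X−1)⋯(X−m+1)] = h(θ)·((1−θ)/θ)^m · Σ_{k=0}^r a_k (m+k)!/θ^{k+1}. -/
open Finset

lemma ndoppe_prod_cast (y m : ℕ) :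
    (∏ i ∈ Finset.range m, (((y + m : ℕ) : ℝ) - i)) = ((y + m).descFactorial m : ℝ) := by
  rw [Nat.descFactorial_eq_prod_range, Nat.cast_prod]
  refine Finset.prod_congr rfl fun i hi => ?_
  rw [Nat.cast_sub (by simp at hi; omega)]

lemma ndoppe_key1 (y m k : ℕ) :
    ((y + m).descFactorial m : ℝ) * ((y + m + k).choose (y + m)) =
      (Nat.factorial (m + k)) / (Nat.factorial k) * ((y + (m + k)).choose (m + k)) := by
  have hk : ((Nat.factorial k : ℕ) : ℝ) ≠ 0 := Nat.cast_ne_zero.2 k.factorial_ne_zero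
  have hy : ((Nat.factorial y : ℕ) : ℝ) ≠ 0 := Nat.cast_ne_zero.2 y.factorial_ne_zero
  rw [div_mul_eq_mul_div, eq_div_iff hk]
  apply mul_right_cancel₀ hy
  have h1 : ((y + m + k).choose (y + m)) * (Nat.factorial (y + m)) * (Nat.factorial k)
      = Nat.factorial (y + m + k) := by
    have := Nat.choose_mul_factorial_mul_factorial (Nat.le_add_right (y + m) k)
    simpa [show y + m + k - (y + m) = k by omega] using this
  have h2 : ((y + (m + k)).choose (m + k)) * (Nat.factorial (m + k)) * (Nat.factorial y)
      = Nat.factorial (y + m + k) := by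
    have := Nat.choose_mul_factorial_mul_factorial
      (show m + k ≤ y + m + k by omega)
    simpa [show y + m + k - (m + k) = y by omega, show y + (m + k) = y + m + k by omega]
      using this
  have hd : (Nat.factorial y) * ((y + m).descFactorial m) = Nat.factorial (y + m) := by
    have := Nat.factorial_mul_descFactorial (Nat.le_add_left m y)
    simpa [show y + m - m = y by omega] using this
  have h1' : (((y + m + k).choose (y + m) : ℕ) : ℝ) * (Nat.factorial (y + m))
      * (Nat.factorial k) = (Nat.factorial (y + m + k) : ℕ) := by exact_mod_cast h1
  have h2' : (((y + (m + k)).choose (m + k) : ℕ) : ℝ) * (Nat.factorial (m + k))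
      * (Nat.factorial y) = (Nat.factorial (y + m + k) : ℕ) := by exact_mod_cast h2
  have hd' : ((Nat.factorial y : ℕ) : ℝ) * ((y + m).descFactorial m)
      = (Nat.factorial (y + m) : ℕ) := by exact_mod_cast hd
  linear_combination (((y + m + k).choose (y + m) : ℕ) : ℝ) * (Nat.factorial k : ℝ) * hd'
    + h1'
    - h2'

lemma ndoppe_shift (m k y : ℕ) {q : ℝ} :
    (∏ i ∈ Finset.range m, (((y + m : ℕ) : ℝ) - i)) * (((y + m) + k).choose (y + m)) * q ^ (y + m)
      = ((Nat.factorial (m + k)) / (Nat.factorial k) * q ^ m)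
        * (((y + (m + k)).choose (m + k)) * q ^ y) := by
  rw [ndoppe_prod_cast, pow_add]
  have := ndoppe_key1 y m k
  linear_combination (q ^ y * q ^ m) * this

lemma ndoppe_summable (m k : ℕ) {q : ℝ} (hq0 : 0 ≤ q) (hq1 : q < 1) :
    Summable (fun x : ℕ => (∏ i ∈ Finset.range m, ((x : ℝ) - i)) * ((x + k).choose x) * q ^ x) := by
  have hq : ‖q‖ < 1 := by rw [Real.norm_eq_abs, abs_of_nonneg hq0]; exact hq1
  have hsum : Summable (fun y : ℕ => (((y + (m + k)).choose (m + k) : ℕ) : ℝ) * q ^ y) :=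
    summable_choose_mul_geometric_of_norm_lt_one _ hq
  refine (summable_nat_add_iff m).1 ?_
  exact ((hsum.mul_left _).congr fun y => (ndoppe_shift m k y).symm)

lemma ndoppe_tsum (m k : ℕ) {q : ℝ} (hq0 : 0 ≤ q) (hq1 : q < 1) :
    ∑' x : ℕ, (∏ i ∈ Finset.range m, ((x : ℝ) - i)) * ((x + k).choose x) * q ^ x
      = (Nat.factorial (m + k)) / (Nat.factorial k) * q ^ m * (1 / (1 - q) ^ (m + k + 1)) := by
  have hq : ‖q‖ < 1 := by rw [Real.norm_eq_abs, abs_of_nonneg hq0]; exact hq1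
  have hf := ndoppe_summable m k hq0 hq1
  rw [← Summable.sum_add_tsum_nat_add m hf]
  have h0 : ∑ i ∈ Finset.range m,
      (∏ j ∈ Finset.range m, ((i : ℝ) - j)) * ((i + k).choose i) * q ^ i = 0 := by
    refine Finset.sum_eq_zero fun i hi => ?_
    have : (∏ j ∈ Finset.range m, ((i : ℝ) - j)) = 0 :=
      Finset.prod_eq_zero hi (by simp)
    rw [this, zero_mul, zero_mul]
  rw [h0, zero_add]
  have : ∀ y : ℕ, (∏ i ∈ Finset.range m, (((y + m : ℕ) : ℝ) - i)) * (((y + m) + k).choose (y + m))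
      * q ^ (y + m) = ((Nat.factorial (m + k)) / (Nat.factorial k) * q ^ m)
        * (((y + (m + k)).choose (m + k)) * q ^ y) := fun y => ndoppe_shift m k y
  rw [tsum_congr this, tsum_mul_left, tsum_choose_mul_geometric_of_norm_lt_one _ hq]
theorem ndoppe_factorial_moment (θ : ℝ) (a : ℕ → ℝ) (r : ℕ) (m : ℕ)
    (hθ0 : 0 < θ) (hθ1 : θ < 1) (ha : ∀ k, 0 ≤ a k)
    (hpos : ∃ k ≤ r, 0 < a k) (hm : 1 ≤ m) :
    ∑' x : ℕ, (∏ i ∈ Finset.range m, ((x : ℝ) - i)) * ndoppePMF θ a r x =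
      ndoppeH θ a r * ((1 - θ) / θ) ^ m *
        ∑ k ∈ Finset.range (r + 1), a k * (Nat.factorial (m + k)) / θ ^ (k + 1) := by
  have hq0 : (0 : ℝ) ≤ 1 - θ := by linarith
  have hq1 : 1 - θ < 1 := by linarith
  have hθ : θ ≠ 0 := ne_of_gt hθ0
  have expand : ∀ x : ℕ, (∏ i ∈ Finset.range m, ((x : ℝ) - i)) * ndoppePMF θ a r x
      = ∑ k ∈ Finset.range (r + 1), (ndoppeH θ a r * a k * (Nat.factorial k)) *
        ((∏ i ∈ Finset.range m, ((x : ℝ) - i)) * ((x + k).choose x) * (1 - θ) ^ x) := by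
    intro x
    simp only [ndoppePMF, ndoppeP, Finset.mul_sum, Finset.sum_mul]
    refine Finset.sum_congr rfl fun k _ => by ring
  rw [tsum_congr expand,
    Summable.tsum_finsetSum (fun k _ => ((ndoppe_summable m k hq0 hq1).mul_left _))]
  rw [Finset.mul_sum]
  refine Finset.sum_congr rfl fun k _ => ?_
  rw [tsum_mul_left, ndoppe_tsum m k hq0 hq1, sub_sub_cancel]
  have hk : ((Nat.factorial k : ℕ) : ℝ) ≠ 0 := Nat.cast_ne_zero.2 k.factorial_ne_zero
  have hθp : θ ^ (m + k + 1) ≠ 0 := pow_ne_zero _ hθ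
  simp only [div_pow]
  field_simp
  ring
end

section
/- Stochastic ordering of NDOPPE: if 0 < θ₁ ≤ θ₂ < 1, then for all t ∈ ℕ, F(t;θ₁) ≤ F(t;θ₂), where F(·;θ) is the NDOPPE cdf; i.e., NDOPPE(θ₂) is stochastically smaller than NDOPPE(θ₁). -/
open Finset

lemma ndoppe_choose_symm (x k : ℕ) : ((x + k).choose x : ℝ) = ((x + k).choose k : ℝ) := by
  have h := Nat.choose_symm (Nat.le_add_left k x)
  rw [Nat.add_sub_cancel] at h
  exact_mod_cast h

lemma ndoppeP_nonneg (a : ℕ → ℝ) (r : ℕ) (ha : ∀ k, 0 ≤ a k) (x : ℕ) :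
    0 ≤ ndoppeP a r x :=
  Finset.sum_nonneg fun k _ =>
    mul_nonneg (mul_nonneg (ha k) (Nat.cast_nonneg _)) (Nat.cast_nonneg _)

lemma ndoppe_hasSum (θ : ℝ) (a : ℕ → ℝ) (r : ℕ) (h0 : 0 < θ) (h1 : θ < 1) :
    HasSum (fun x => ndoppeP a r x * (1 - θ) ^ x)
      (∑ k ∈ Finset.range (r + 1), a k * (Nat.factorial k) / θ ^ (k + 1)) := by
  have hr : ‖(1 - θ : ℝ)‖ < 1 := by
    rw [Real.norm_eq_abs, abs_lt]; constructor <;> linarith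
  have key : ∀ k : ℕ,
      HasSum (fun x : ℕ => a k * (Nat.factorial k) * ((x + k).choose x) * (1 - θ) ^ x)
        (a k * (Nat.factorial k) / θ ^ (k + 1)) := by
    intro k
    have h := (hasSum_choose_mul_geometric_of_norm_lt_one (𝕜 := ℝ) k hr).mul_left
      (a k * (Nat.factorial k))
    have e1 : (1 : ℝ) - (1 - θ) = θ := by ring
    rw [e1] at h
    have h2 : a k * (Nat.factorial k) * (1 / θ ^ (k + 1))
        = a k * (Nat.factorial k) / θ ^ (k + 1) := by ring
    rw [h2] at h
    refine h.congr_fun fun x => ?_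
    rw [ndoppe_choose_symm]
    ring
  have := hasSum_sum (f := fun k (x : ℕ) =>
      a k * (Nat.factorial k) * ((x + k).choose x) * (1 - θ) ^ x)
    (s := Finset.range (r + 1)) (fun k _ => key k)
  refine this.congr_fun fun x => ?_
  rw [ndoppeP, Finset.sum_mul]

lemma ndoppe_sum_pos (θ : ℝ) (a : ℕ → ℝ) (r : ℕ) (h0 : 0 < θ) (ha : ∀ k, 0 ≤ a k)
    (hpos : ∃ k ≤ r, 0 < a k) :
    0 < ∑ k ∈ Finset.range (r + 1), a k * (Nat.factorial k) / θ ^ (k + 1) := by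
  obtain ⟨k, hk, hak⟩ := hpos
  refine Finset.sum_pos' (fun i _ => div_nonneg
    (mul_nonneg (ha i) (Nat.cast_nonneg _)) (pow_nonneg h0.le _))
    ⟨k, Finset.mem_range.2 (by omega), ?_⟩
  have hf : (0:ℝ) < (Nat.factorial k : ℝ) := by exact_mod_cast Nat.factorial_pos k
  exact div_pos (mul_pos hak hf) (pow_pos h0 _)

theorem ndoppe_stochastic_order (θ₁ θ₂ : ℝ) (a : ℕ → ℝ) (r : ℕ)
    (hθ1 : 0 < θ₁) (h12 : θ₁ ≤ θ₂) (hθ2 : θ₂ < 1) (ha : ∀ k, 0 ≤ a k)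
    (hpos : ∃ k ≤ r, 0 < a k) (t : ℕ) :
    ∑ x ∈ Finset.range (t + 1), ndoppePMF θ₁ a r x ≤
      ∑ x ∈ Finset.range (t + 1), ndoppePMF θ₂ a r x := by
  have hθ1' : θ₁ < 1 := lt_of_le_of_lt h12 hθ2
  have hθ2' : 0 < θ₂ := lt_of_lt_of_le hθ1 h12
  set c : ℝ := 1 - θ₁ with hc
  set b : ℝ := 1 - θ₂ with hb
  have hb0 : 0 ≤ b := by simp [hb]; linarith
  have hc0 : 0 ≤ c := by simp [hc]; linarith
  have hbc : b ≤ c := by simp [hb, hc]; linarith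
  set P : ℕ → ℝ := ndoppeP a r with hP
  have hPn : ∀ x, 0 ≤ P x := ndoppeP_nonneg a r ha
  set u : ℕ → ℝ := fun x => P x * c ^ x with hu
  set v : ℕ → ℝ := fun x => P x * b ^ x with hv
  have hun : ∀ x, 0 ≤ u x := fun x => mul_nonneg (hPn x) (pow_nonneg hc0 x)
  have hvn : ∀ x, 0 ≤ v x := fun x => mul_nonneg (hPn x) (pow_nonneg hb0 x)
  set S₁ : ℝ := ∑ k ∈ Finset.range (r + 1), a k * (Nat.factorial k) / θ₁ ^ (k + 1) with hS1
  set S₂ : ℝ := ∑ k ∈ Finset.range (r + 1), a k * (Nat.factorial k) / θ₂ ^ (k + 1) with hS2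
  have hsum1 : HasSum u S₁ := ndoppe_hasSum θ₁ a r hθ1 hθ1'
  have hsum2 : HasSum v S₂ := ndoppe_hasSum θ₂ a r hθ2' hθ2
  have hS1pos : 0 < S₁ := ndoppe_sum_pos θ₁ a r hθ1 ha hpos
  have hS2pos : 0 < S₂ := ndoppe_sum_pos θ₂ a r hθ2' ha hpos
  set T₁ : ℝ := ∑ x ∈ Finset.range (t + 1), u x with hT1
  set T₂ : ℝ := ∑ x ∈ Finset.range (t + 1), v x with hT2
  -- rewrite the goal
  have goal_eq1 : ∑ x ∈ Finset.range (t + 1), ndoppePMF θ₁ a r x = T₁ / S₁ := by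
    rw [hT1, Finset.sum_div]
    refine Finset.sum_congr rfl fun x _ => ?_
    simp only [ndoppePMF, ndoppeH, hu]
    rw [← hS1, ← hc]
    ring
  have goal_eq2 : ∑ x ∈ Finset.range (t + 1), ndoppePMF θ₂ a r x = T₂ / S₂ := by
    rw [hT2, Finset.sum_div]
    refine Finset.sum_congr rfl fun x _ => ?_
    simp only [ndoppePMF, ndoppeH, hv]
    rw [← hS2, ← hb]
    ring
  rw [goal_eq1, goal_eq2, div_le_div_iff₀ hS1pos hS2pos]
  -- tails
  have husum : Summable u := hsum1.summable
  have hvsum : Summable v := hsum2.summable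
  set R₁ : ℝ := ∑' j : ℕ, u (j + (t + 1)) with hR1
  set R₂ : ℝ := ∑' j : ℕ, v (j + (t + 1)) with hR2
  have hsplit1 : S₁ = T₁ + R₁ := by
    rw [hT1, hR1, ← hsum1.tsum_eq, ← Summable.sum_add_tsum_nat_add (t + 1) husum]
  have hsplit2 : S₂ = T₂ + R₂ := by
    rw [hT2, hR2, ← hsum2.tsum_eq, ← Summable.sum_add_tsum_nat_add (t + 1) hvsum]
  have husum' : Summable (fun j : ℕ => u (j + (t + 1))) :=
    (summable_nat_add_iff (t + 1)).2 husum
  have hvsum' : Summable (fun j : ℕ => v (j + (t + 1))) :=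
    (summable_nat_add_iff (t + 1)).2 hvsum
  -- key pointwise inequality
  have hkey : ∀ x ≤ t, ∀ j : ℕ, u x * v (j + (t + 1)) ≤ v x * u (j + (t + 1)) := by
    intro x hx j
    set y := j + (t + 1) with hy
    have hxy : x ≤ y := by omega
    have hpow : c ^ x * b ^ y ≤ b ^ x * c ^ y := by
      obtain ⟨m, hm⟩ : ∃ m, y = x + m := ⟨y - x, by omega⟩
      rw [hm, pow_add, pow_add]
      have : b ^ m ≤ c ^ m := pow_le_pow_left₀ hb0 hbc m
      calc c ^ x * (b ^ x * b ^ m) = (c ^ x * b ^ x) * b ^ m := by ring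
        _ ≤ (c ^ x * b ^ x) * c ^ m := by
            apply mul_le_mul_of_nonneg_left this
            exact mul_nonneg (pow_nonneg hc0 x) (pow_nonneg hb0 x)
        _ = b ^ x * (c ^ x * c ^ m) := by ring
    have hPP : 0 ≤ P x * P y := mul_nonneg (hPn x) (hPn y)
    calc u x * v y = (P x * P y) * (c ^ x * b ^ y) := by simp only [hu, hv]; ring
      _ ≤ (P x * P y) * (b ^ x * c ^ y) := mul_le_mul_of_nonneg_left hpow hPP
      _ = v x * u y := by simp only [hu, hv]; ring
  -- T₁ * R₂ ≤ T₂ * R₁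
  have htail : T₁ * R₂ ≤ T₂ * R₁ := by
    rw [hT1, hT2, Finset.sum_mul, Finset.sum_mul]
    refine Finset.sum_le_sum fun x hx => ?_
    have hx' : x ≤ t := by have := Finset.mem_range.1 hx; omega
    calc u x * R₂ = ∑' j : ℕ, u x * v (j + (t + 1)) := (hvsum'.tsum_mul_left (u x)).symm
      _ ≤ ∑' j : ℕ, v x * u (j + (t + 1)) := by
          refine Summable.tsum_le_tsum (fun j => hkey x hx' j) (hvsum'.mul_left (u x))
            (husum'.mul_left (v x))
      _ = v x * R₁ := husum'.tsum_mul_left (v x)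
  have hT1n : 0 ≤ T₁ := Finset.sum_nonneg fun x _ => hun x
  have hT2n : 0 ≤ T₂ := Finset.sum_nonneg fun x _ => hvn x
  rw [hsplit1, hsplit2]
  nlinarith [htail]
end

section
/- Index of dispersion exceeds one: for X ~ NDOPPE(θ) with 0 < θ < 1, Var(X)/E(X) ≥ 1, i.e., the distribution is over-dispersed. -/
open Finset

lemma nd_hs0 {θ : ℝ} (hθ0 : 0 < θ) (hθ1 : θ < 1) (k : ℕ) :
    HasSum (fun n : ℕ ↦ ((n + k).choose k : ℝ) * (1 - θ) ^ n) (1 / θ ^ (k + 1)) := by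
  have hr : ‖(1 - θ : ℝ)‖ < 1 := by
    rw [Real.norm_eq_abs, abs_lt]; constructor <;> linarith
  have := hasSum_choose_mul_geometric_of_norm_lt_one (𝕜 := ℝ) k hr
  simpa using this

lemma nd_key1 (m k : ℕ) : (m + 1) * ((m + 1 + k).choose k) = (k + 1) * ((m + (k + 1)).choose (k + 1)) := by
  have h := Nat.choose_succ_right_eq (m + k + 1) k
  have h1 : m + k + 1 - k = m + 1 := by omega
  rw [h1] at h
  have e1 : m + 1 + k = m + k + 1 := by omega
  have e2 : m + (k + 1) = m + k + 1 := by omega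
  rw [e1, e2]
  rw [mul_comm, ← h, mul_comm]

lemma nd_key2 (m k : ℕ) : (m + 2) * (m + 1) * ((m + 2 + k).choose k) = (k + 1) * (k + 2) * ((m + (k + 2)).choose (k + 2)) := by
  have h1 := Nat.choose_succ_right_eq (m + k + 2) (k + 1)
  have h2 := Nat.choose_succ_right_eq (m + k + 2) k
  have e1 : m + k + 2 - (k + 1) = m + 1 := by omega
  have e2 : m + k + 2 - k = m + 2 := by omega
  rw [e1] at h1; rw [e2] at h2
  have e3 : m + 2 + k = m + k + 2 := by omega
  have e4 : m + (k + 2) = m + k + 2 := by omega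
  rw [e3, e4]
  -- h1 : (m+k+2).choose (k+2) * (k+2) = (m+k+2).choose (k+1) * (m+1)
  -- h2 : (m+k+2).choose (k+1) * (k+1) = (m+k+2).choose k * (m+2)
  nlinarith [h1, h2]

lemma nd_hs1 {θ : ℝ} (hθ0 : 0 < θ) (hθ1 : θ < 1) (k : ℕ) :
    HasSum (fun n : ℕ ↦ (n : ℝ) * ((n + k).choose k : ℝ) * (1 - θ) ^ n)
      ((k + 1) * (1 - θ) / θ ^ (k + 2)) := by
  have h := (nd_hs0 hθ0 hθ1 (k + 1)).mul_left ((k + 1 : ℝ) * (1 - θ))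
  have hshift : (fun m : ℕ ↦ (fun n : ℕ ↦ (n : ℝ) * ((n + k).choose k : ℝ) * (1 - θ) ^ n) (m + 1))
      = fun m : ℕ ↦ ((k : ℝ) + 1) * (1 - θ) * (((m + (k + 1)).choose (k + 1) : ℝ) * (1 - θ) ^ m) := by
    funext m
    have := nd_key1 m k
    have hc : ((m : ℝ) + 1) * ((m + 1 + k).choose k : ℝ) = ((k : ℝ) + 1) * ((m + (k + 1)).choose (k + 1) : ℝ) := by
      exact_mod_cast congrArg (Nat.cast : ℕ → ℝ) this
    push_cast
    rw [pow_succ]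
    push_cast at hc
    linear_combination ((1 - θ) ^ m * (1 - θ)) * hc
  rw [← hshift] at h
  have h3 := (hasSum_nat_add_iff (f := fun n : ℕ ↦ (n : ℝ) * ((n + k).choose k : ℝ) * (1 - θ) ^ n) 1).mp h
  have hv : ((k : ℝ) + 1) * (1 - θ) * (1 / θ ^ (k + 1 + 1)) +
      ∑ i ∈ Finset.range 1, ((i : ℝ) * (((i + k).choose k) : ℝ) * (1 - θ) ^ i)
      = ((k : ℝ) + 1) * (1 - θ) / θ ^ (k + 2) := by
    simp; ring
  rw [← hv]
  exact h3


lemma nd_hs11 {θ : ℝ} (hθ0 : 0 < θ) (hθ1 : θ < 1) (k : ℕ) :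
    HasSum (fun n : ℕ ↦ (n : ℝ) * ((n : ℝ) - 1) * ((n + k).choose k : ℝ) * (1 - θ) ^ n)
      ((k + 1) * (k + 2) * (1 - θ) ^ 2 / θ ^ (k + 3)) := by
  have h := (nd_hs0 hθ0 hθ1 (k + 2)).mul_left ((k + 1 : ℝ) * (k + 2) * (1 - θ) ^ 2)
  have hshift : (fun m : ℕ ↦ (fun n : ℕ ↦ (n : ℝ) * ((n : ℝ) - 1) * ((n + k).choose k : ℝ) * (1 - θ) ^ n) (m + 2))
      = fun m : ℕ ↦ ((k : ℝ) + 1) * ((k : ℝ) + 2) * (1 - θ) ^ 2 * (((m + (k + 2)).choose (k + 2) : ℝ) * (1 - θ) ^ m) := by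
    funext m
    have := nd_key2 m k
    have hc : ((m : ℝ) + 2) * ((m : ℝ) + 1) * ((m + 2 + k).choose k : ℝ)
        = ((k : ℝ) + 1) * ((k : ℝ) + 2) * ((m + (k + 2)).choose (k + 2) : ℝ) := by
      exact_mod_cast congrArg (Nat.cast : ℕ → ℝ) this
    push_cast
    rw [show m + 2 = m + 2 from rfl, pow_add]
    linear_combination ((1 - θ) ^ m * (1 - θ) ^ 2) * hc
  rw [← hshift] at h
  have h3 := (hasSum_nat_add_iff
    (f := fun n : ℕ ↦ (n : ℝ) * ((n : ℝ) - 1) * ((n + k).choose k : ℝ) * (1 - θ) ^ n) 2).mp h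
  have hv : ((k : ℝ) + 1) * ((k : ℝ) + 2) * (1 - θ) ^ 2 * (1 / θ ^ (k + 2 + 1)) +
      ∑ i ∈ Finset.range 2, ((i : ℝ) * ((i : ℝ) - 1) * (((i + k).choose k) : ℝ) * (1 - θ) ^ i)
      = ((k : ℝ) + 1) * ((k : ℝ) + 2) * (1 - θ) ^ 2 / θ ^ (k + 3) := by
    rw [Finset.sum_range_succ, Finset.sum_range_one]
    norm_num
    ring
  rw [← hv]
  exact h3

lemma nd_hs2 {θ : ℝ} (hθ0 : 0 < θ) (hθ1 : θ < 1) (k : ℕ) :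
    HasSum (fun n : ℕ ↦ (n : ℝ) ^ 2 * ((n + k).choose k : ℝ) * (1 - θ) ^ n)
      ((k + 1) * (k + 2) * (1 - θ) ^ 2 / θ ^ (k + 3) + (k + 1) * (1 - θ) / θ ^ (k + 2)) := by
  have h := (nd_hs11 hθ0 hθ1 k).add (nd_hs1 hθ0 hθ1 k)
  convert h using 1
  funext n
  ring


theorem ndoppe_over_dispersed (θ : ℝ) (a : ℕ → ℝ) (r : ℕ)
    (hθ0 : 0 < θ) (hθ1 : θ < 1) (ha : ∀ k, 0 ≤ a k)
    (hpos : ∃ k ≤ r, 0 < a k) :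
    1 ≤ ((∑' x : ℕ, (x : ℝ) ^ 2 * ndoppePMF θ a r x) -
          (∑' x : ℕ, (x : ℝ) * ndoppePMF θ a r x) ^ 2) /
        (∑' x : ℕ, (x : ℝ) * ndoppePMF θ a r x) := by
  obtain ⟨k₀, hk₀r, hk₀⟩ := hpos
  have hθne : θ ≠ 0 := hθ0.ne'
  have hq0 : 0 < 1 - θ := by linarith
  set H := ndoppeH θ a r with hHdef
  -- positivity of the normalizing sum
  have hTpos : 0 < ∑ k ∈ Finset.range (r + 1), a k * (Nat.factorial k) / θ ^ (k + 1) := by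
    apply Finset.sum_pos'
    · intro k _
      exact div_nonneg (mul_nonneg (ha k) (by positivity)) (by positivity)
    · exact ⟨k₀, Finset.mem_range.mpr (by omega),
        div_pos (mul_pos hk₀ (by positivity)) (by positivity)⟩
  have hH : 0 < H := by
    rw [hHdef, ndoppeH]; exact inv_pos.mpr hTpos
  -- choose symmetry
  have hcs : ∀ x k : ℕ, (x + k).choose x = (x + k).choose k := by
    intro x k
    have := Nat.choose_symm (show k ≤ x + k from Nat.le_add_left k x)
    rwa [Nat.add_sub_cancel] at this
  -- first moment
  set S1 := ∑ k ∈ Finset.range (r + 1),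
    a k * (Nat.factorial k) * ((k + 1) * (1 - θ) / θ ^ (k + 2)) with hS1def
  set S2 := ∑ k ∈ Finset.range (r + 1),
    a k * (Nat.factorial k) * ((k + 1) * (k + 2) * (1 - θ) ^ 2 / θ ^ (k + 3)
      + (k + 1) * (1 - θ) / θ ^ (k + 2)) with hS2def
  have hE : HasSum (fun x : ℕ ↦ (x : ℝ) * ndoppePMF θ a r x) (H * S1) := by
    have h1 : HasSum (fun x : ℕ ↦ ∑ k ∈ Finset.range (r + 1),
        a k * (Nat.factorial k) * ((x : ℝ) * ((x + k).choose k : ℝ) * (1 - θ) ^ x)) S1 :=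
      hasSum_sum fun k _ => (nd_hs1 hθ0 hθ1 k).mul_left _
    have h2 := h1.mul_left H
    convert h2 using 1
    · rfl
    funext x
    simp only [ndoppePMF, ndoppeP, Finset.mul_sum, Finset.sum_mul]
    refine Finset.sum_congr rfl fun k hk => ?_
    rw [hcs x k]
    ring
  have hM : HasSum (fun x : ℕ ↦ (x : ℝ) ^ 2 * ndoppePMF θ a r x) (H * S2) := by
    have h1 : HasSum (fun x : ℕ ↦ ∑ k ∈ Finset.range (r + 1),
        a k * (Nat.factorial k) * ((x : ℝ) ^ 2 * ((x + k).choose k : ℝ) * (1 - θ) ^ x)) S2 :=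
      hasSum_sum fun k _ => (nd_hs2 hθ0 hθ1 k).mul_left _
    have h2 := h1.mul_left H
    convert h2 using 1
    · rfl
    funext x
    simp only [ndoppePMF, ndoppeP, Finset.mul_sum, Finset.sum_mul]
    refine Finset.sum_congr rfl fun k hk => ?_
    rw [hcs x k]
    ring
  rw [hE.tsum_eq, hM.tsum_eq]
  -- set up weights
  set w : ℕ → ℝ := fun k ↦ H * (a k * (Nat.factorial k) / θ ^ (k + 1)) with hwdef
  set μ : ℕ → ℝ := fun k ↦ ((k : ℝ) + 1) * (1 - θ) / θ with hμdef
  have hw : ∀ k, 0 ≤ w k := by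
    intro k
    exact mul_nonneg hH.le (div_nonneg (mul_nonneg (ha k) (by positivity)) (by positivity))
  have hμnn : ∀ k, 0 ≤ μ k := by
    intro k; rw [hμdef]; positivity
  have hsumw : ∑ k ∈ Finset.range (r + 1), w k = 1 := by
    rw [hwdef, ← Finset.mul_sum, hHdef, ndoppeH]
    exact inv_mul_cancel₀ hTpos.ne'
  have hS1w : H * S1 = ∑ k ∈ Finset.range (r + 1), w k * μ k := by
    rw [hS1def, Finset.mul_sum]
    refine Finset.sum_congr rfl fun k hk => ?_
    simp only [hwdef, hμdef]
    field_simp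
    ring
  have hS2w : H * S2 = ∑ k ∈ Finset.range (r + 1), w k * (μ k ^ 2 + μ k / θ) := by
    rw [hS2def, Finset.mul_sum]
    refine Finset.sum_congr rfl fun k hk => ?_
    simp only [hwdef, hμdef]
    field_simp
    ring
  -- positivity of the mean
  have hEpos : 0 < H * S1 := by
    rw [hS1w]
    apply Finset.sum_pos'
    · intro k _; exact mul_nonneg (hw k) (hμnn k)
    · refine ⟨k₀, Finset.mem_range.mpr (by omega), ?_⟩
      have hwk : 0 < w k₀ := by
        have h1 : (0:ℝ) < Nat.factorial k₀ := by positivity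
        exact mul_pos hH (div_pos (mul_pos hk₀ h1) (by positivity))
      have hμk : 0 < μ k₀ := by rw [hμdef]; positivity
      exact mul_pos hwk hμk
  rw [le_div_iff₀ hEpos, one_mul]
  -- Cauchy–Schwarz
  have hCS : (∑ k ∈ Finset.range (r + 1), w k * μ k) ^ 2
      ≤ ∑ k ∈ Finset.range (r + 1), w k * μ k ^ 2 := by
    have h := Finset.sum_mul_sq_le_sq_mul_sq (Finset.range (r + 1))
      (fun k ↦ Real.sqrt (w k)) (fun k ↦ Real.sqrt (w k) * μ k)
    have e1 : ∀ k ∈ Finset.range (r + 1),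
        Real.sqrt (w k) * (Real.sqrt (w k) * μ k) = w k * μ k := by
      intro k _
      rw [← mul_assoc, Real.mul_self_sqrt (hw k)]
    have e2 : ∀ k ∈ Finset.range (r + 1),
        Real.sqrt (w k) ^ 2 = w k := fun k _ => Real.sq_sqrt (hw k)
    have e3 : ∀ k ∈ Finset.range (r + 1),
        (Real.sqrt (w k) * μ k) ^ 2 = w k * μ k ^ 2 := by
      intro k _
      rw [mul_pow, Real.sq_sqrt (hw k)]
    rw [Finset.sum_congr rfl e1, Finset.sum_congr rfl e2, Finset.sum_congr rfl e3, hsumw,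
      one_mul] at h
    exact h
  have hsplit : ∑ k ∈ Finset.range (r + 1), w k * (μ k ^ 2 + μ k / θ)
      = (∑ k ∈ Finset.range (r + 1), w k * μ k ^ 2)
        + ∑ k ∈ Finset.range (r + 1), w k * (μ k / θ) := by
    rw [← Finset.sum_add_distrib]
    exact Finset.sum_congr rfl fun k _ => by ring
  have hmono : ∑ k ∈ Finset.range (r + 1), w k * μ k
      ≤ ∑ k ∈ Finset.range (r + 1), w k * (μ k / θ) := by
    refine Finset.sum_le_sum fun k _ => ?_
    have : μ k ≤ μ k / θ := by
      rw [le_div_iff₀ hθ0]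
      nlinarith [hμnn k]
    exact mul_le_mul_of_nonneg_left this (hw k)
  rw [hS1w, hS2w, hsplit]
  nlinarith [hCS, hmono]
end

section
/- Density of the compound negative binomial–exponential distribution: if N ~ NB(k+1, θ) (pmf C(n+k,n)(1−θ)ⁿθ^{k+1}) and claims are i.i.d. Exp(γ), then S = Σ_{i=1}^N X_i has P(S=0) = θ^{k+1} and density on x > 0 equal to (k+1)γ(1−θ)θ^{k+1}e^{−γx}·₁F₁(k+2; 2; γ(1−θ)x), where ₁F₁(a;b;z) = Σ_{m=0}^∞ ((a)_m/(b)_m)·zᵐ/m! is the confluent hypergeometric function. -/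
open Finset

/-- The confluent hypergeometric function ₁F₁(a;b;z) = ∑_{m} ((a)_m/(b)_m) z^m/m!. -/
noncomputable def hyp1F1 (a b z : ℝ) : ℝ :=
  ∑' m : ℕ,
    ((∏ i ∈ Finset.range m, (a + i)) / (∏ i ∈ Finset.range m, (b + i))) *
      z ^ m / (Nat.factorial m)

lemma prod_two (n : ℕ) : (∏ i ∈ Finset.range n, ((2:ℝ) + i)) = (Nat.factorial (n+1)) := by
  induction n with
  | zero => simp [Nat.factorial]
  | succ n ih =>
    rw [Finset.prod_range_succ, ih]
    have : (n+1+1).factorial = (n+2) * (n+1).factorial := by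
      rw [show n+1+1 = n+2 from rfl, Nat.factorial_succ]
    rw [this]
    push_cast
    ring

lemma prod_kk (k n : ℕ) :
    (∏ i ∈ Finset.range n, ((k:ℝ) + 2 + i)) =
      (Nat.factorial (k+1+n)) / (Nat.factorial (k+1)) := by
  induction n with
  | zero =>
    simp only [Finset.prod_range_zero, Nat.add_zero]
    rw [div_self]
    exact_mod_cast (Nat.factorial_pos _).ne'
  | succ n ih =>
    rw [Finset.prod_range_succ, ih]
    have : (k+1+(n+1)).factorial = (k+2+n) * (k+1+n).factorial := by
      rw [show k+1+(n+1) = (k+1+n)+1 from by ring, Nat.factorial_succ]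
      congr 1
      omega
    rw [this]
    have h : ((Nat.factorial (k+1) : ℝ)) ≠ 0 := by
      exact_mod_cast (Nat.factorial_pos _).ne'
    push_cast
    field_simp

theorem compound_negative_binomial_exponential (θ γ : ℝ) (k : ℕ)
    (hθ0 : 0 < θ) (hθ1 : θ < 1) (hγ : 0 < γ) :
    ((k.choose 0 : ℝ) * (1 - θ) ^ (0 : ℕ) * θ ^ (k + 1) = θ ^ (k + 1)) ∧
    ∀ x : ℝ, 0 < x →
      ∑' n : ℕ,
          (((n + 1 + k).choose (n + 1) : ℝ) * (1 - θ) ^ (n + 1) * θ ^ (k + 1)) *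
            (γ ^ (n + 1) * x ^ n * Real.exp (-γ * x) / (Nat.factorial n)) =
        ((k : ℝ) + 1) * γ * (1 - θ) * θ ^ (k + 1) * Real.exp (-γ * x) *
          hyp1F1 ((k : ℝ) + 2) 2 (γ * (1 - θ) * x) := by
  constructor
  · simp
  · intro x hx
    rw [hyp1F1, ← tsum_mul_left]
    apply tsum_congr
    intro n
    rw [prod_two, prod_kk]
    have hc : ((n + 1 + k).choose (n + 1) : ℝ) =
        (Nat.factorial (n+1+k)) / ((Nat.factorial (n+1)) * (Nat.factorial k)) := by
      have hd : n + 1 + k - (n + 1) = k := by omega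
      rw [Nat.cast_choose ℝ (by omega : n + 1 ≤ n + 1 + k), hd]
    rw [hc]
    have h1 : ((Nat.factorial (n+1) : ℝ)) ≠ 0 := by exact_mod_cast (Nat.factorial_pos _).ne'
    have h2 : ((Nat.factorial k : ℝ)) ≠ 0 := by exact_mod_cast (Nat.factorial_pos _).ne'
    have h3 : ((Nat.factorial (k+1) : ℝ)) ≠ 0 := by exact_mod_cast (Nat.factorial_pos _).ne'
    have h4 : ((Nat.factorial n : ℝ)) ≠ 0 := by exact_mod_cast (Nat.factorial_pos _).ne'
    have h5 : ((Nat.factorial (k+1+n) : ℝ)) = (Nat.factorial (n+1+k)) := by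
      norm_cast
      congr 1
      omega
    rw [h5]
    have hk1 : ((Nat.factorial (k+1) : ℝ)) = (k+1) * (Nat.factorial k) := by
      rw [Nat.factorial_succ]; push_cast; ring
    have hn1 : ((Nat.factorial (n+1) : ℝ)) = (n+1) * (Nat.factorial n) := by
      rw [Nat.factorial_succ]; push_cast; ring
    rw [hk1, hn1]
    have hz : (γ * (1 - θ) * x) ^ n = γ ^ n * (1 - θ) ^ n * x ^ n := by
      rw [mul_pow, mul_pow]
    rw [hz]
    field_simp
    ring
end
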